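/- Let Φ be a Young function and 1/p₋(Φ) ≤ θ < ∞, and define Φ_θ(r) = ∫₀^{r^θ} Φ(t)/t dt. Then Φ_θ is a Young function, and θ·p₋(Φ) ≤ p₋(Φ_θ) ≤ p₊(Φ_θ) ≤ θ·p₊(Φ). Moreover, for θ = 1, Φ₁(r) ≤ Φ(r) ≤ Φ₁(2r) for all r > 0, so the Orlicz norms ‖·‖_{L^Φ} and ‖·‖_{L^{Φ₁}} are equivalent. -/

import Mathlib

open MeasureTheory ENNReal NNReal

noncomputable section

/-- A Young function `Φ : [0,∞] → [0,∞]`: increasing, convex, `Φ(0)=0`, `Φ(∞)=∞`,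
`lim_{t→0}Φ(t)=0`, with `a(Φ)<∞` and `b(Φ)>0`. -/
structure YoungFunction (Φ : ℝ≥0∞ → ℝ≥0∞) : Prop where
  mono : Monotone Φ
  map_zero : Φ 0 = 0
  map_top : Φ ⊤ = ⊤
  convex : ∀ (a b : ℝ≥0) (x y : ℝ≥0∞), a + b = 1 →
    Φ ((a : ℝ≥0∞) * x + (b : ℝ≥0∞) * y) ≤ (a : ℝ≥0∞) * Φ x + (b : ℝ≥0∞) * Φ y
  tendsto_zero : Filter.Tendsto Φ (nhdsWithin 0 (Set.Ioi 0)) (nhds 0)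
  exists_pos : ∃ t : ℝ≥0∞, t ≠ ⊤ ∧ 0 < Φ t
  exists_finite : ∃ t : ℝ≥0∞, 0 < t ∧ Φ t < ⊤

/-- The generalized inverse `Φ⁻¹(u) = inf{t ≥ 0 : Φ(t) > u}` (with `inf ∅ = ∞`,
so `Φ⁻¹(∞) = ∞`). -/
def yinv (Φ : ℝ≥0∞ → ℝ≥0∞) (u : ℝ≥0∞) : ℝ≥0∞ := sInf {t | u < Φ t}


/-- `Φ_θ(r) = ∫₀^{r^θ} Φ(t)/t dt`. -/
def phiTheta (Φ : ℝ≥0∞ → ℝ≥0∞) (θ : ℝ) (r : ℝ≥0) : ℝ≥0∞ :=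
  ∫⁻ t in Set.Ioo (0 : ℝ) ((r : ℝ) ^ θ), Φ (ENNReal.ofReal t) / ENNReal.ofReal t

/-- The Orlicz (Luxemburg) norm with respect to `Ψ`. -/
def orliczNorm {n : ℕ} (Ψ : ℝ≥0 → ℝ≥0∞) (f : (Fin n → ℝ) → ℝ≥0) : ℝ≥0∞ :=
  sInf ((fun c : ℝ≥0 => (c : ℝ≥0∞)) ''
    {c : ℝ≥0 | 0 < c ∧ (∫⁻ x, Ψ (f x / c)) ≤ 1})


open MeasureTheory ENNReal NNReal Set

namespace S19

lemma lintegral_image_deriv {s : Set ℝ} {f f' : ℝ → ℝ} (hs : MeasurableSet s)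
    (hf' : ∀ x ∈ s, HasDerivWithinAt f (f' x) s x) (hf : Set.InjOn f s) (g : ℝ → ℝ≥0∞) :
    ∫⁻ x in f '' s, g x = ∫⁻ x in s, ENNReal.ofReal |f' x| * g (f x) := by
  simpa only [ContinuousLinearMap.det_toSpanSingleton] using
    lintegral_image_eq_lintegral_abs_det_fderiv_mul volume hs
      (fun x hx => (hf' x hx).hasFDerivWithinAt) hf g

lemma scalar_div_le (A : ℝ≥0∞) {c₁ c₂ d₁ d₂ : ℝ} (hc₁ : 0 ≤ c₁) (hc₂ : 0 ≤ c₂)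
    (hd₁ : 0 < d₁) (hd₂ : 0 < d₂) (h : c₁ * d₂ ≤ c₂ * d₁) :
    ENNReal.ofReal c₁ * A / ENNReal.ofReal d₁ ≤ ENNReal.ofReal c₂ * A / ENNReal.ofReal d₂ := by
  rw [div_eq_mul_inv, div_eq_mul_inv, mul_right_comm, mul_right_comm (ENNReal.ofReal c₂)]
  refine mul_le_mul_left ?_ A
  rw [← ENNReal.ofReal_inv_of_pos hd₁, ← ENNReal.ofReal_inv_of_pos hd₂,
    ← ENNReal.ofReal_mul hc₁, ← ENNReal.ofReal_mul hc₂]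
  apply ENNReal.ofReal_le_ofReal
  rw [← div_eq_mul_inv, ← div_eq_mul_inv, div_le_div_iff₀ hd₁ hd₂]
  exact h


lemma scalar_div_eq (A : ℝ≥0∞) {c₁ c₂ d₁ d₂ : ℝ} (hc₁ : 0 ≤ c₁) (hc₂ : 0 ≤ c₂)
    (hd₁ : 0 < d₁) (hd₂ : 0 < d₂) (h : c₁ * d₂ = c₂ * d₁) :
    ENNReal.ofReal c₁ * A / ENNReal.ofReal d₁ = ENNReal.ofReal c₂ * A / ENNReal.ofReal d₂ :=
  le_antisymm (scalar_div_le A hc₁ hc₂ hd₁ hd₂ h.le)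
    (scalar_div_le A hc₂ hc₁ hd₂ hd₁ h.ge)

def g0 (Φ : ℝ≥0∞ → ℝ≥0∞) (t : ℝ) : ℝ≥0∞ := Φ (ENNReal.ofReal t) / ENNReal.ofReal t

def hfun (Φ : ℝ≥0∞ → ℝ≥0∞) (θ : ℝ) (s : ℝ) : ℝ≥0∞ :=
  ENNReal.ofReal θ * Φ (ENNReal.ofReal (s ^ θ)) / ENNReal.ofReal s

lemma phiTheta_def (Φ : ℝ≥0∞ → ℝ≥0∞) (θ : ℝ) (r : ℝ≥0) :
    phiTheta Φ θ r = ∫⁻ t in Set.Ioo (0 : ℝ) ((r : ℝ) ^ θ), g0 Φ t := rfl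

lemma phiTheta_zero (Φ : ℝ≥0∞ → ℝ≥0∞) {θ : ℝ} (hθ : θ ≠ 0) : phiTheta Φ θ 0 = 0 := by
  rw [phiTheta_def]
  simp [Real.zero_rpow hθ]

lemma cov (θ : ℝ) (hθ : 0 < θ) (g : ℝ → ℝ≥0∞) {R : ℝ} (hR : 0 ≤ R) :
    ∫⁻ t in Set.Ioo 0 (R ^ θ), g t
      = ∫⁻ s in Set.Ioo (0 : ℝ) R, ENNReal.ofReal |θ * s ^ (θ - 1)| * g (s ^ θ) := by
  have himg : (fun s : ℝ => s ^ θ) '' Set.Ioo 0 R = Set.Ioo 0 (R ^ θ) := by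
    ext t
    constructor
    · rintro ⟨s, ⟨hs0, hsR⟩, rfl⟩
      exact ⟨Real.rpow_pos_of_pos hs0 θ, Real.rpow_lt_rpow hs0.le hsR hθ⟩
    · rintro ⟨ht0, htR⟩
      refine ⟨t ^ (1 / θ), ⟨Real.rpow_pos_of_pos ht0 _, ?_⟩, ?_⟩
      · have h2 := Real.rpow_lt_rpow ht0.le htR (by positivity : (0:ℝ) < 1 / θ)
        rwa [← Real.rpow_mul hR, mul_one_div, div_self hθ.ne', Real.rpow_one] at h2
      · show (t ^ (1 / θ)) ^ θ = t
        rw [← Real.rpow_mul ht0.le, one_div, inv_mul_cancel₀ hθ.ne', Real.rpow_one]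
  have hmono : StrictMonoOn (fun s : ℝ => s ^ θ) (Set.Ioo 0 R) :=
    fun u hu v _ huv => Real.rpow_lt_rpow hu.1.le huv hθ
  rw [← himg, lintegral_image_deriv measurableSet_Ioo
    (fun x hx => (Real.hasDerivAt_rpow_const (Or.inl hx.1.ne')).hasDerivWithinAt)
    hmono.injOn g]

lemma lincov (c : ℝ) (hc : 0 < c) (g : ℝ → ℝ≥0∞) (A : ℝ) :
    ∫⁻ t in Set.Ioo 0 (c * A), g t
      = ∫⁻ u in Set.Ioo (0 : ℝ) A, ENNReal.ofReal c * g (c * u) := by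
  have himg : (fun u : ℝ => c * u) '' Set.Ioo 0 A = Set.Ioo 0 (c * A) := by
    ext t
    constructor
    · rintro ⟨u, ⟨h1, h2⟩, rfl⟩
      exact ⟨by positivity, by show c * u < c * A; nlinarith⟩
    · rintro ⟨h1, h2⟩
      refine ⟨t / c, ⟨div_pos h1 hc, (div_lt_iff₀' hc).mpr h2⟩, ?_⟩
      show c * (t / c) = t
      field_simp
  have hinj : Set.InjOn (fun u : ℝ => c * u) (Set.Ioo 0 A) :=
    fun u _ v _ h => mul_left_cancel₀ hc.ne' h
  rw [← himg, lintegral_image_deriv (f' := fun _ => c) measurableSet_Ioo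
    (fun x _ => (by simpa using (hasDerivAt_id x).const_mul c : HasDerivAt (fun u : ℝ => c * u) c x).hasDerivWithinAt) hinj g]
  rw [abs_of_pos hc]


variable {Φ : ℝ≥0∞ → ℝ≥0∞}

lemma phi_scale (hΦ : YoungFunction Φ) {s t : ℝ} (hs : 0 < s) (hst : s ≤ t) :
    Φ (ENNReal.ofReal s) ≤ ENNReal.ofReal (s / t) * Φ (ENNReal.ofReal t) := by
  have ht : 0 < t := hs.trans_le hst
  set a : ℝ≥0 := Real.toNNReal (s / t) with ha
  have ha1 : a ≤ 1 := by
    rw [ha, ← Real.toNNReal_one]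
    exact Real.toNNReal_mono ((div_le_one ht).mpr hst)
  have hcon := hΦ.convex a (1 - a) (ENNReal.ofReal t) 0 (add_tsub_cancel_of_le ha1)
  rw [mul_zero, add_zero, hΦ.map_zero, mul_zero, add_zero] at hcon
  have hcast : (a : ℝ≥0∞) * ENNReal.ofReal t = ENNReal.ofReal s := by
    show ENNReal.ofReal (s / t) * ENNReal.ofReal t = ENNReal.ofReal s
    rw [← ENNReal.ofReal_mul (by positivity), div_mul_cancel₀ s ht.ne']
  rw [hcast] at hcon
  exact hcon

lemma g0_mono (hΦ : YoungFunction Φ) {s t : ℝ} (hs : 0 < s) (hst : s ≤ t) :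
    g0 Φ s ≤ g0 Φ t := by
  have ht : 0 < t := hs.trans_le hst
  have h1 := phi_scale hΦ hs hst
  unfold g0
  calc Φ (ENNReal.ofReal s) / ENNReal.ofReal s
      ≤ ENNReal.ofReal (s / t) * Φ (ENNReal.ofReal t) / ENNReal.ofReal s :=
        ENNReal.div_le_div_right h1 _
    _ = ENNReal.ofReal 1 * Φ (ENNReal.ofReal t) / ENNReal.ofReal t :=
        scalar_div_eq _ (by positivity) zero_le_one hs ht (by field_simp)
    _ = Φ (ENNReal.ofReal t) / ENNReal.ofReal t := by
        rw [ENNReal.ofReal_one, one_mul]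

lemma hfun_mono (hΦ : YoungFunction Φ) {θ q : ℝ} (hθ : 0 < θ) (hθq : 1 ≤ θ * q)
    (hq : ∀ (r l : ℝ≥0), 0 < l → l < 1 →
      Φ ((l : ℝ≥0∞) * (r : ℝ≥0∞)) ≤ (l : ℝ≥0∞) ^ q * Φ (r : ℝ≥0∞))
    {s t : ℝ} (hs : 0 < s) (hst : s ≤ t) :
    hfun Φ θ s ≤ hfun Φ θ t := by
  have ht : 0 < t := hs.trans_le hst
  rcases hst.eq_or_lt with rfl | hlt
  · exact le_rfl
  have hl0 : 0 < s / t := div_pos hs ht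
  have hlt1 : s / t < 1 := (div_lt_one ht).mpr hlt
  set L : ℝ≥0 := Real.toNNReal ((s / t) ^ θ) with hLdef
  set R : ℝ≥0 := Real.toNNReal (t ^ θ) with hRdef
  have hLpos : (0:ℝ) < (s / t) ^ θ := Real.rpow_pos_of_pos hl0 θ
  have hL0 : 0 < L := Real.toNNReal_pos.mpr hLpos
  have hL1 : L < 1 := by
    rw [hLdef, ← Real.toNNReal_one]
    exact (Real.toNNReal_lt_toNNReal_iff_of_nonneg hLpos.le).mpr
      (Real.rpow_lt_one hl0.le hlt1 hθ)
  have key := hq R L hL0 hL1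
  have hLc : (L : ℝ≥0∞) = ENNReal.ofReal ((s / t) ^ θ) := rfl
  have hRc : (R : ℝ≥0∞) = ENNReal.ofReal (t ^ θ) := rfl
  have hmul : (L : ℝ≥0∞) * (R : ℝ≥0∞) = ENNReal.ofReal (s ^ θ) := by
    rw [hLc, hRc, ← ENNReal.ofReal_mul hLpos.le, ← Real.mul_rpow hl0.le ht.le,
      div_mul_cancel₀ s ht.ne']
  rw [hmul, hLc, hRc] at key
  set A := Φ (ENNReal.ofReal (t ^ θ)) with hA
  have hexp : (ENNReal.ofReal ((s / t) ^ θ)) ^ q = ENNReal.ofReal ((s / t) ^ (θ * q)) := by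
    rw [ENNReal.ofReal_rpow_of_pos hLpos, ← Real.rpow_mul hl0.le]
  have hcross : θ * (s / t) ^ (θ * q) * t ≤ θ * s := by
    have h2 : (s / t) ^ (θ * q) ≤ s / t := by
      calc (s / t) ^ (θ * q) ≤ (s / t) ^ (1:ℝ) :=
            Real.rpow_le_rpow_of_exponent_ge hl0 hlt1.le hθq
        _ = s / t := Real.rpow_one _
    calc θ * (s / t) ^ (θ * q) * t ≤ θ * (s / t) * t :=
          mul_le_mul_of_nonneg_right (mul_le_mul_of_nonneg_left h2 hθ.le) ht.le
      _ = θ * s := by field_simp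
  calc hfun Φ θ s
      = ENNReal.ofReal θ * Φ (ENNReal.ofReal (s ^ θ)) / ENNReal.ofReal s := rfl
    _ ≤ ENNReal.ofReal θ * (ENNReal.ofReal ((s / t) ^ θ) ^ q * A) / ENNReal.ofReal s :=
        ENNReal.div_le_div_right (mul_le_mul_right key _) _
    _ = ENNReal.ofReal (θ * (s / t) ^ (θ * q)) * A / ENNReal.ofReal s := by
        rw [hexp, ← mul_assoc, ← ENNReal.ofReal_mul hθ.le]
    _ ≤ ENNReal.ofReal θ * A / ENNReal.ofReal t :=
        scalar_div_le A (by positivity) hθ.le hs ht hcross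
    _ = hfun Φ θ t := rfl

lemma phiTheta_eq (Φ : ℝ≥0∞ → ℝ≥0∞) {θ : ℝ} (hθ : 0 < θ) (r : ℝ≥0) :
    phiTheta Φ θ r = ∫⁻ s in Set.Ioo (0 : ℝ) (r : ℝ), hfun Φ θ s := by
  rw [phiTheta_def, cov θ hθ _ r.coe_nonneg]
  refine setLIntegral_congr_fun measurableSet_Ioo (fun s hs => ?_)
  have hs0 : (0:ℝ) < s := hs.1
  have hsp : (0:ℝ) < s ^ θ := Real.rpow_pos_of_pos hs0 θ
  have habs : |θ * s ^ (θ - 1)| = θ * s ^ (θ - 1) := abs_of_pos (by positivity)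
  rw [habs]
  unfold g0 hfun
  rw [← mul_div_assoc]
  refine scalar_div_eq _ (by positivity) hθ.le hsp hs0 ?_
  rw [mul_assoc]
  congr 1
  rw [← Real.rpow_add_one hs0.ne' (θ - 1), sub_add_cancel]


lemma conv_main {g : ℝ → ℝ≥0∞} (hg : ∀ ⦃s t : ℝ⦄, 0 < s → s ≤ t → g s ≤ g t)
    {X M Y : ℝ} {a b : ℝ≥0} (hab : a + b = 1) (hX : 0 ≤ X) (hXM : X ≤ M) (hMY : M ≤ Y)
    (hM : M = (a : ℝ) * X + (b : ℝ) * Y) :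
    ∫⁻ t in Set.Ioo 0 M, g t ≤
      (a : ℝ≥0∞) * (∫⁻ t in Set.Ioo 0 X, g t) + (b : ℝ≥0∞) * ∫⁻ t in Set.Ioo 0 Y, g t := by
  have habr : (a : ℝ) + (b : ℝ) = 1 := by exact_mod_cast congrArg (fun x : ℝ≥0 => (x:ℝ)) hab
  rcases (hX.trans hXM).eq_or_lt with hM0 | hM0
  · rw [← hM0]
    simp
  set B := Set.Ioo 0 M ∩ Set.Ici X with hBdef
  set C := Set.Ioo 0 Y ∩ Set.Ici M with hCdef
  have hBm : MeasurableSet B := measurableSet_Ioo.inter measurableSet_Ici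
  have hCm : MeasurableSet C := measurableSet_Ioo.inter measurableSet_Ici
  have hBu : Set.Ioo 0 X ∪ B = Set.Ioo 0 M := by
    ext t
    simp only [hBdef, Set.mem_union, Set.mem_Ioo, Set.mem_inter_iff, Set.mem_Ici]
    constructor
    · rintro (⟨h1, h2⟩ | ⟨⟨h1, h2⟩, h3⟩) <;> constructor <;> linarith
    · rintro ⟨h1, h2⟩
      rcases lt_or_ge t X with h | h
      · exact Or.inl ⟨h1, h⟩
      · exact Or.inr ⟨⟨h1, h2⟩, h⟩
  have hCu : Set.Ioo 0 M ∪ C = Set.Ioo 0 Y := by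
    ext t
    simp only [hCdef, Set.mem_union, Set.mem_Ioo, Set.mem_inter_iff, Set.mem_Ici]
    constructor
    · rintro (⟨h1, h2⟩ | ⟨⟨h1, h2⟩, h3⟩) <;> constructor <;> linarith
    · rintro ⟨h1, h2⟩
      rcases lt_or_ge t M with h | h
      · exact Or.inl ⟨h1, h⟩
      · exact Or.inr ⟨⟨h1, h2⟩, h⟩
  have hBd : Disjoint (Set.Ioo 0 X) B := by
    rw [Set.disjoint_left]
    rintro t ⟨_, h2⟩ ⟨_, h3⟩
    exact absurd h3 (not_le.mpr h2)
  have hCd : Disjoint (Set.Ioo 0 M) C := by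
    rw [Set.disjoint_left]
    rintro t ⟨_, h2⟩ ⟨_, h3⟩
    exact absurd h3 (not_le.mpr h2)
  have e1 : ∫⁻ t in Set.Ioo 0 M, g t = (∫⁻ t in Set.Ioo 0 X, g t) + ∫⁻ t in B, g t := by
    rw [← hBu, lintegral_union hBm hBd]
  have e2 : ∫⁻ t in Set.Ioo 0 Y, g t = (∫⁻ t in Set.Ioo 0 M, g t) + ∫⁻ t in C, g t := by
    rw [← hCu, lintegral_union hCm hCd]
  have hvB : volume B = ENNReal.ofReal (M - X) := by
    rcases hX.eq_or_lt with h0 | h0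
    · rw [hBdef, ← h0, Set.inter_eq_left.mpr (fun t ht => ht.1.le), Real.volume_Ioo, sub_zero]
    · have hB' : B = Set.Ico X M := by
        ext t
        simp only [hBdef, Set.mem_inter_iff, Set.mem_Ioo, Set.mem_Ici, Set.mem_Ico]
        constructor
        · rintro ⟨⟨h1, h2⟩, h3⟩; exact ⟨h3, h2⟩
        · rintro ⟨h1, h2⟩; exact ⟨⟨h0.trans_le h1, h2⟩, h1⟩
      rw [hB', Real.volume_Ico]
  have hvC : volume C = ENNReal.ofReal (Y - M) := by
    have hC' : C = Set.Ico M Y := by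
      ext t
      simp only [hCdef, Set.mem_inter_iff, Set.mem_Ioo, Set.mem_Ici, Set.mem_Ico]
      constructor
      · rintro ⟨⟨h1, h2⟩, h3⟩; exact ⟨h3, h2⟩
      · rintro ⟨h1, h2⟩; exact ⟨⟨hM0.trans_le h1, h2⟩, h1⟩
    rw [hC', Real.volume_Ico]
  have hBle : ∫⁻ t in B, g t ≤ g M * ENNReal.ofReal (M - X) := by
    calc ∫⁻ t in B, g t ≤ ∫⁻ _ in B, g M :=
          setLIntegral_mono' hBm fun t ht => hg ht.1.1 ht.1.2.le
      _ = g M * ENNReal.ofReal (M - X) := by rw [setLIntegral_const, hvB]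
  have hCge : g M * ENNReal.ofReal (Y - M) ≤ ∫⁻ t in C, g t := by
    calc g M * ENNReal.ofReal (Y - M) = ∫⁻ _ in C, g M := by rw [setLIntegral_const, hvC]
      _ ≤ ∫⁻ t in C, g t := setLIntegral_mono' hCm fun t ht => hg hM0 ht.2
  have hco : (a : ℝ≥0∞) * ENNReal.ofReal (M - X) = (b : ℝ≥0∞) * ENNReal.ofReal (Y - M) := by
    rw [← ENNReal.ofReal_coe_nnreal, ← ENNReal.ofReal_coe_nnreal,
      ← ENNReal.ofReal_mul a.coe_nonneg, ← ENNReal.ofReal_mul b.coe_nonneg]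
    congr 1
    nlinarith [hM, habr]
  have hkey : (a : ℝ≥0∞) * ∫⁻ t in B, g t ≤ (b : ℝ≥0∞) * ∫⁻ t in C, g t := by
    calc (a : ℝ≥0∞) * ∫⁻ t in B, g t ≤ (a : ℝ≥0∞) * (g M * ENNReal.ofReal (M - X)) :=
          mul_le_mul_right hBle _
      _ = g M * ((a : ℝ≥0∞) * ENNReal.ofReal (M - X)) := by ring
      _ = g M * ((b : ℝ≥0∞) * ENNReal.ofReal (Y - M)) := by rw [hco]
      _ = (b : ℝ≥0∞) * (g M * ENNReal.ofReal (Y - M)) := by ring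
      _ ≤ (b : ℝ≥0∞) * ∫⁻ t in C, g t := mul_le_mul_right hCge _
  have hone : (a : ℝ≥0∞) + (b : ℝ≥0∞) = 1 := by
    rw [← ENNReal.coe_add, hab, ENNReal.coe_one]
  rw [e2, e1]
  calc (∫⁻ t in Set.Ioo 0 X, g t) + ∫⁻ t in B, g t
      = ((a : ℝ≥0∞) + b) * (∫⁻ t in Set.Ioo 0 X, g t)
        + ((a : ℝ≥0∞) + b) * ∫⁻ t in B, g t := by rw [hone, one_mul, one_mul]
    _ = ((a : ℝ≥0∞) * (∫⁻ t in Set.Ioo 0 X, g t) + (b : ℝ≥0∞) * (∫⁻ t in Set.Ioo 0 X, g t)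
        + (b : ℝ≥0∞) * ∫⁻ t in B, g t) + (a : ℝ≥0∞) * ∫⁻ t in B, g t := by ring
    _ ≤ ((a : ℝ≥0∞) * (∫⁻ t in Set.Ioo 0 X, g t) + (b : ℝ≥0∞) * (∫⁻ t in Set.Ioo 0 X, g t)
        + (b : ℝ≥0∞) * ∫⁻ t in B, g t) + (b : ℝ≥0∞) * ∫⁻ t in C, g t := add_le_add_right hkey _
    _ = (a : ℝ≥0∞) * (∫⁻ t in Set.Ioo 0 X, g t)
        + (b : ℝ≥0∞) * ((∫⁻ t in Set.Ioo 0 X, g t) + (∫⁻ t in B, g t) + ∫⁻ t in C, g t) := by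
        ring

lemma scale_aux (Φ : ℝ≥0∞ → ℝ≥0∞) (hΦ : YoungFunction Φ) (θ q : ℝ) (r : ℝ≥0) (L : ℝ≥0)
    (hL : 0 < L)
    (key : ∀ u : ℝ≥0, Φ ((L : ℝ≥0∞) * (u : ℝ≥0∞)) ≤ (L : ℝ≥0∞) ^ q * Φ (u : ℝ≥0∞)) :
    ∫⁻ t in Set.Ioo (0:ℝ) ((L : ℝ) * ((r : ℝ) ^ θ)), g0 Φ t
      ≤ (L : ℝ≥0∞) ^ q * phiTheta Φ θ r := by
  have hLr : (0:ℝ) < (L : ℝ) := hL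
  rw [lincov _ hLr]
  have hpt : ∀ u ∈ Set.Ioo (0:ℝ) ((r:ℝ) ^ θ),
      ENNReal.ofReal (L : ℝ) * g0 Φ ((L : ℝ) * u) ≤ (L : ℝ≥0∞) ^ q * g0 Φ u := by
    intro u hu
    have hu0 : 0 < u := hu.1
    have hcast : ENNReal.ofReal ((L : ℝ) * u) = (L : ℝ≥0∞) * ENNReal.ofReal u := by
      rw [← ENNReal.ofReal_coe_nnreal, ← ENNReal.ofReal_mul L.coe_nonneg]
    have e : ENNReal.ofReal (L : ℝ) * g0 Φ ((L : ℝ) * u)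
        = Φ ((L : ℝ≥0∞) * ENNReal.ofReal u) / ENNReal.ofReal u := by
      unfold g0
      rw [hcast, ENNReal.ofReal_coe_nnreal, ← mul_div_assoc,
        ENNReal.mul_div_mul_left _ _ (by exact_mod_cast hL.ne') ENNReal.coe_ne_top]
    rw [e]
    have k2 := key u.toNNReal
    have : (u.toNNReal : ℝ≥0∞) = ENNReal.ofReal u := rfl
    rw [this] at k2
    calc Φ ((L : ℝ≥0∞) * ENNReal.ofReal u) / ENNReal.ofReal u
        ≤ ((L : ℝ≥0∞) ^ q * Φ (ENNReal.ofReal u)) / ENNReal.ofReal u :=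
          ENNReal.div_le_div_right k2 _
      _ = (L : ℝ≥0∞) ^ q * g0 Φ u := by rw [mul_div_assoc]; rfl
  calc ∫⁻ u in Set.Ioo (0:ℝ) ((r:ℝ) ^ θ), ENNReal.ofReal (L : ℝ) * g0 Φ ((L : ℝ) * u)
      ≤ ∫⁻ u in Set.Ioo (0:ℝ) ((r:ℝ) ^ θ), (L : ℝ≥0∞) ^ q * g0 Φ u :=
        setLIntegral_mono' measurableSet_Ioo hpt
    _ = (L : ℝ≥0∞) ^ q * phiTheta Φ θ r := by
        rw [lintegral_const_mul' _ _ ?_, phiTheta_def]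
        rw [← ENNReal.coe_rpow_of_ne_zero hL.ne']
        exact ENNReal.coe_ne_top

end S19

theorem stmt19 (Φ : ℝ≥0∞ → ℝ≥0∞) (hΦ : YoungFunction Φ) (p θ : ℝ) (hp : 1 ≤ p)
    (hdown : ∀ (r l : ℝ≥0), 0 < l → l < 1 →
      Φ ((l : ℝ≥0∞) * (r : ℝ≥0∞)) ≤ (l : ℝ≥0∞) ^ p * Φ (r : ℝ≥0∞))
    (hθ : 1 / p ≤ θ) :
    (Monotone (phiTheta Φ θ) ∧ phiTheta Φ θ 0 = 0 ∧
      ∀ (a b x y : ℝ≥0), a + b = 1 →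
        phiTheta Φ θ (a * x + b * y) ≤
          (a : ℝ≥0∞) * phiTheta Φ θ x + (b : ℝ≥0∞) * phiTheta Φ θ y) ∧
    (∀ p' : ℝ, (∀ (r l : ℝ≥0), 0 < l → l < 1 →
        Φ ((l : ℝ≥0∞) * (r : ℝ≥0∞)) ≤ (l : ℝ≥0∞) ^ p' * Φ (r : ℝ≥0∞)) →
      ∀ (r l : ℝ≥0), 0 < l → l < 1 →
        phiTheta Φ θ (l * r) ≤ (l : ℝ≥0∞) ^ (θ * p') * phiTheta Φ θ r) ∧
    (∀ p' : ℝ, (∀ (r l : ℝ≥0), 1 < l →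
        Φ ((l : ℝ≥0∞) * (r : ℝ≥0∞)) ≤ (l : ℝ≥0∞) ^ p' * Φ (r : ℝ≥0∞)) →
      ∀ (r l : ℝ≥0), 1 < l →
        phiTheta Φ θ (l * r) ≤ (l : ℝ≥0∞) ^ (θ * p') * phiTheta Φ θ r) ∧
    (∀ r : ℝ≥0, 0 < r →
      phiTheta Φ 1 r ≤ Φ (r : ℝ≥0∞) ∧ Φ (r : ℝ≥0∞) ≤ phiTheta Φ 1 (2 * r)) ∧
    (∀ (nn : ℕ) (f : (Fin nn → ℝ) → ℝ≥0),
      orliczNorm (fun s => phiTheta Φ 1 s) f ≤ orliczNorm (fun s : ℝ≥0 => Φ (s : ℝ≥0∞)) f ∧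
      orliczNorm (fun s : ℝ≥0 => Φ (s : ℝ≥0∞)) f ≤
        2 * orliczNorm (fun s => phiTheta Φ 1 s) f) := by
  have hp0 : (0:ℝ) < p := lt_of_lt_of_le one_pos hp
  have hθ0 : (0:ℝ) < θ := lt_of_lt_of_le (by positivity) hθ
  have hθp : 1 ≤ θ * p := by
    have := (div_le_iff₀ hp0).mp hθ
    linarith
  -- unified scaling lemma
  have main_scale : ∀ (q : ℝ) (r l : ℝ≥0), 0 < l →
      (∀ u : ℝ≥0, Φ (((l ^ θ : ℝ≥0) : ℝ≥0∞) * (u : ℝ≥0∞)) ≤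
        ((l ^ θ : ℝ≥0) : ℝ≥0∞) ^ q * Φ (u : ℝ≥0∞)) →
      phiTheta Φ θ (l * r) ≤ (l : ℝ≥0∞) ^ (θ * q) * phiTheta Φ θ r := by
    intro q r l hl0 hkey
    have hL0 : 0 < l ^ θ := NNReal.rpow_pos hl0
    have hbound : ((l * r : ℝ≥0) : ℝ) ^ θ = ((l ^ θ : ℝ≥0) : ℝ) * ((r : ℝ) ^ θ) := by
      rw [NNReal.coe_mul, Real.mul_rpow l.coe_nonneg r.coe_nonneg, NNReal.coe_rpow]
    have h1 : phiTheta Φ θ (l * r) ≤ ((l ^ θ : ℝ≥0) : ℝ≥0∞) ^ q * phiTheta Φ θ r := by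
      rw [S19.phiTheta_def, hbound]
      exact S19.scale_aux Φ hΦ θ q r _ hL0 hkey
    rwa [ENNReal.coe_rpow_of_ne_zero hl0.ne', ← ENNReal.rpow_mul] at h1
  have part2 : ∀ p' : ℝ, (∀ (r l : ℝ≥0), 0 < l → l < 1 →
      Φ ((l : ℝ≥0∞) * (r : ℝ≥0∞)) ≤ (l : ℝ≥0∞) ^ p' * Φ (r : ℝ≥0∞)) →
      ∀ (r l : ℝ≥0), 0 < l → l < 1 →
      phiTheta Φ θ (l * r) ≤ (l : ℝ≥0∞) ^ (θ * p') * phiTheta Φ θ r := by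
    intro p' hp' r l hl0 hl1
    exact main_scale p' r l hl0 fun u =>
      hp' u (l ^ θ) (NNReal.rpow_pos hl0) (NNReal.rpow_lt_one hl1 hθ0)
  have part3 : ∀ p' : ℝ, (∀ (r l : ℝ≥0), 1 < l →
      Φ ((l : ℝ≥0∞) * (r : ℝ≥0∞)) ≤ (l : ℝ≥0∞) ^ p' * Φ (r : ℝ≥0∞)) →
      ∀ (r l : ℝ≥0), 1 < l →
      phiTheta Φ θ (l * r) ≤ (l : ℝ≥0∞) ^ (θ * p') * phiTheta Φ θ r := by
    intro p' hp' r l hl1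
    exact main_scale p' r l (lt_trans one_pos hl1) fun u =>
      hp' u (l ^ θ) (NNReal.one_lt_rpow hl1 hθ0)
  have part1a : Monotone (phiTheta Φ θ) := by
    intro r1 r2 h12
    rw [S19.phiTheta_def, S19.phiTheta_def]
    exact lintegral_mono_set (Set.Ioo_subset_Ioo le_rfl
      (Real.rpow_le_rpow r1.coe_nonneg (NNReal.coe_le_coe.mpr h12) hθ0.le))
  have part1b : phiTheta Φ θ 0 = 0 := S19.phiTheta_zero Φ hθ0.ne'
  have hmono_h : ∀ ⦃s t : ℝ⦄, 0 < s → s ≤ t → S19.hfun Φ θ s ≤ S19.hfun Φ θ t :=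
    fun s t hs hst => S19.hfun_mono hΦ hθ0 hθp hdown hs hst
  have convAux : ∀ (a b x y : ℝ≥0), a + b = 1 → x ≤ y →
      phiTheta Φ θ (a * x + b * y) ≤
        (a : ℝ≥0∞) * phiTheta Φ θ x + (b : ℝ≥0∞) * phiTheta Φ θ y := by
    intro a b x y hab hxy
    by_cases hb0 : b = 0
    · have ha1 : a = 1 := by simpa [hb0] using hab
      simp [hb0, ha1]
    by_cases ha0 : a = 0
    · have hb1 : b = 1 := by simpa [ha0] using hab
      simp [ha0, hb1]
    have ha0' : 0 < a := zero_lt_iff.mpr ha0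
    have hb0' : 0 < b := zero_lt_iff.mpr hb0
    have habr : (a : ℝ) + (b : ℝ) = 1 := by
      exact_mod_cast congrArg (fun z : ℝ≥0 => (z : ℝ)) hab
    have hb1 : b < 1 := by
      rcases lt_or_ge b 1 with h | h
      · exact h
      · exfalso
        apply ha0
        have hbr : (1:ℝ) ≤ (b : ℝ) := by exact_mod_cast h
        have har : (a : ℝ) ≤ 0 := by linarith
        exact_mod_cast le_antisymm har a.coe_nonneg
    by_cases hx0 : x = 0
    · subst hx0
      rw [mul_zero, zero_add, part1b, mul_zero, zero_add]
      calc phiTheta Φ θ (b * y) ≤ (b : ℝ≥0∞) ^ (θ * p) * phiTheta Φ θ y :=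
            part2 p hdown y b hb0' hb1
        _ ≤ (b : ℝ≥0∞) ^ (1:ℝ) * phiTheta Φ θ y :=
            mul_le_mul_left (ENNReal.rpow_le_rpow_of_exponent_ge
              (by exact_mod_cast hb1.le) hθp) _
        _ = (b : ℝ≥0∞) * phiTheta Φ θ y := by rw [ENNReal.rpow_one]
    have hx0' : 0 < x := zero_lt_iff.mpr hx0
    have hxyr : (x : ℝ) ≤ (y : ℝ) := NNReal.coe_le_coe.mpr hxy
    have hMr : ((a * x + b * y : ℝ≥0) : ℝ) = (a : ℝ) * (x : ℝ) + (b : ℝ) * (y : ℝ) := by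
      push_cast; ring
    have hxid : (a : ℝ) * (x : ℝ) + (b : ℝ) * (x : ℝ) = (x : ℝ) := by
      rw [← add_mul, habr, one_mul]
    have hyid : (a : ℝ) * (y : ℝ) + (b : ℝ) * (y : ℝ) = (y : ℝ) := by
      rw [← add_mul, habr, one_mul]
    have hxm : (x : ℝ) ≤ ((a * x + b * y : ℝ≥0) : ℝ) := by
      rw [hMr]
      linarith [mul_le_mul_of_nonneg_left hxyr b.coe_nonneg]
    have hmy : ((a * x + b * y : ℝ≥0) : ℝ) ≤ (y : ℝ) := by
      rw [hMr]
      linarith [mul_le_mul_of_nonneg_left hxyr a.coe_nonneg]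
    rw [S19.phiTheta_eq Φ hθ0, S19.phiTheta_eq Φ hθ0, S19.phiTheta_eq Φ hθ0]
    exact S19.conv_main hmono_h hab x.coe_nonneg hxm hmy hMr
  have part1c : ∀ (a b x y : ℝ≥0), a + b = 1 →
      phiTheta Φ θ (a * x + b * y) ≤
        (a : ℝ≥0∞) * phiTheta Φ θ x + (b : ℝ≥0∞) * phiTheta Φ θ y := by
    intro a b x y hab
    rcases le_total x y with h | h
    · exact convAux a b x y hab h
    · have h2 := convAux b a y x (by rwa [add_comm] at hab) h
      rw [add_comm (b * y) (a * x)] at h2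
      rwa [add_comm ((b : ℝ≥0∞) * phiTheta Φ θ y)] at h2
  have hg0r : ∀ r : ℝ≥0, S19.g0 Φ (r : ℝ) = Φ (r : ℝ≥0∞) / (r : ℝ≥0∞) := by
    intro r
    unfold S19.g0
    rw [ENNReal.ofReal_coe_nnreal]
  have part4 : ∀ r : ℝ≥0, 0 < r →
      phiTheta Φ 1 r ≤ Φ (r : ℝ≥0∞) ∧ Φ (r : ℝ≥0∞) ≤ phiTheta Φ 1 (2 * r) := by
    intro r hr
    have hr' : (0:ℝ) < (r : ℝ) := hr
    have hcan : Φ (r : ℝ≥0∞) / (r : ℝ≥0∞) * (r : ℝ≥0∞) = Φ (r : ℝ≥0∞) :=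
      ENNReal.div_mul_cancel (by exact_mod_cast hr.ne') ENNReal.coe_ne_top
    constructor
    · rw [S19.phiTheta_def, Real.rpow_one]
      calc ∫⁻ t in Set.Ioo (0:ℝ) (r : ℝ), S19.g0 Φ t
          ≤ ∫⁻ _ in Set.Ioo (0:ℝ) (r : ℝ), Φ (r : ℝ≥0∞) / (r : ℝ≥0∞) :=
            setLIntegral_mono' measurableSet_Ioo fun t ht => by
              rw [← hg0r r]; exact S19.g0_mono hΦ ht.1 ht.2.le
        _ = Φ (r : ℝ≥0∞) / (r : ℝ≥0∞) * volume (Set.Ioo (0:ℝ) (r : ℝ)) :=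
            setLIntegral_const _ _
        _ = Φ (r : ℝ≥0∞) / (r : ℝ≥0∞) * (r : ℝ≥0∞) := by
            rw [Real.volume_Ioo, sub_zero, ENNReal.ofReal_coe_nnreal]
        _ = Φ (r : ℝ≥0∞) := hcan
    · rw [S19.phiTheta_def, Real.rpow_one]
      have hsub : Set.Ico (r : ℝ) ((2 * r : ℝ≥0) : ℝ) ⊆ Set.Ioo (0:ℝ) ((2 * r : ℝ≥0) : ℝ) :=
        fun t ht => ⟨lt_of_lt_of_le hr' ht.1, ht.2⟩
      have hvol : volume (Set.Ico (r : ℝ) ((2 * r : ℝ≥0) : ℝ)) = (r : ℝ≥0∞) := by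
        rw [Real.volume_Ico]
        rw [show ((2 * r : ℝ≥0) : ℝ) - (r : ℝ) = (r : ℝ) by push_cast; ring]
        rw [ENNReal.ofReal_coe_nnreal]
      calc Φ (r : ℝ≥0∞) = Φ (r : ℝ≥0∞) / (r : ℝ≥0∞) * (r : ℝ≥0∞) := hcan.symm
        _ = ∫⁻ _ in Set.Ico (r : ℝ) ((2 * r : ℝ≥0) : ℝ), Φ (r : ℝ≥0∞) / (r : ℝ≥0∞) := by
            rw [setLIntegral_const, hvol]
        _ ≤ ∫⁻ t in Set.Ico (r : ℝ) ((2 * r : ℝ≥0) : ℝ), S19.g0 Φ t :=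
            setLIntegral_mono' measurableSet_Ico fun t ht => by
              rw [← hg0r r]; exact S19.g0_mono hΦ hr' ht.1
        _ ≤ ∫⁻ t in Set.Ioo (0:ℝ) ((2 * r : ℝ≥0) : ℝ), S19.g0 Φ t :=
            lintegral_mono_set hsub
  have part5 : ∀ (nn : ℕ) (f : (Fin nn → ℝ) → ℝ≥0),
      orliczNorm (fun s => phiTheta Φ 1 s) f ≤ orliczNorm (fun s : ℝ≥0 => Φ (s : ℝ≥0∞)) f ∧
      orliczNorm (fun s : ℝ≥0 => Φ (s : ℝ≥0∞)) f ≤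
        2 * orliczNorm (fun s => phiTheta Φ 1 s) f := by
    have hle : ∀ s : ℝ≥0, phiTheta Φ 1 s ≤ Φ (s : ℝ≥0∞) := by
      intro s
      rcases eq_or_ne s 0 with rfl | hs
      · rw [S19.phiTheta_zero Φ one_ne_zero]
        exact zero_le
      · exact (part4 s (zero_lt_iff.mpr hs)).1
    have hge : ∀ s : ℝ≥0, Φ (s : ℝ≥0∞) ≤ phiTheta Φ 1 (2 * s) := by
      intro s
      rcases eq_or_ne s 0 with rfl | hs
      · rw [show ((0 : ℝ≥0) : ℝ≥0∞) = 0 from rfl, hΦ.map_zero]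
        exact zero_le
      · exact (part4 s (zero_lt_iff.mpr hs)).2
    intro nn f
    constructor
    · unfold orliczNorm
      apply sInf_le_sInf
      apply Set.image_mono
      intro c hc
      exact ⟨hc.1, le_trans (lintegral_mono fun x => hle _) hc.2⟩
    · unfold orliczNorm
      conv_rhs => rw [sInf_eq_iInf', ENNReal.mul_iInf_of_ne two_ne_zero ENNReal.ofNat_ne_top]
      refine le_iInf ?_
      rintro ⟨v, hv⟩
      obtain ⟨c, ⟨hc0, hc1⟩, rfl⟩ := hv
      refine sInf_le ⟨2 * c, ⟨by positivity, ?_⟩, by push_cast; ring⟩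
      calc ∫⁻ x, Φ ((f x / (2 * c) : ℝ≥0) : ℝ≥0∞)
          ≤ ∫⁻ x, phiTheta Φ 1 (2 * (f x / (2 * c))) := lintegral_mono fun x => hge _
        _ = ∫⁻ x, phiTheta Φ 1 (f x / c) := by
            congr 1
            funext x
            congr 1
            rw [mul_comm (2 : ℝ≥0) c, ← div_div, mul_comm]
            exact div_mul_cancel₀ _ two_ne_zero
        _ ≤ 1 := hc1
  exact ⟨⟨part1a, part1b, part1c⟩, part2, part3, part4, part5⟩
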